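/- The vectors u = (β₃/(√2·β), 1/β, β₋₁/(√2·β)) and v₁ = (1/(β·β₂), −β₋₁/(2√2), β₋₁/(2·β₂²)) in ℝ³ are orthogonal; equivalently, β₃/(√2·β²·β₂) − β₋₁/(2√2·β) + β₋₁²/(2√2·β·β₂²) = 0. (This is the orthogonality, at the vertex c, of the embedding of ρ into κκ̄ with the embedding of the identity bimodule 1 into κκ̄ for the AH+1 subfactor, i.e. the compatibility of Tables 1 and 2 of the paper with the decomposition κκ̄ = 1 + ρ.) -/

import Mathlib

/-- β = √((7+√17)/2) -/
noncomputable def β : ℝ := Real.sqrt ((7 + Real.sqrt 17) / 2)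

/-- β₋₁ = √((9+√17)/2) -/
noncomputable def βm1 : ℝ := Real.sqrt ((9 + Real.sqrt 17) / 2)

/-- β₂ = √((3+√17)/2) -/
noncomputable def β₂ : ℝ := Real.sqrt ((3 + Real.sqrt 17) / 2)

/-- β₃ = √((1+√17)/2) -/
noncomputable def β₃ : ℝ := Real.sqrt ((1 + Real.sqrt 17) / 2)

lemma s17_pos : (0:ℝ) < Real.sqrt 17 := Real.sqrt_pos.mpr (by norm_num)

lemma s17_sq : (Real.sqrt 17) ^ 2 = 17 := Real.sq_sqrt (by norm_num)

lemma β_pos : 0 < β := Real.sqrt_pos.mpr (by nlinarith [s17_pos])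

lemma βm1_pos : 0 < βm1 := Real.sqrt_pos.mpr (by nlinarith [s17_pos])

lemma β₂_pos : 0 < β₂ := Real.sqrt_pos.mpr (by nlinarith [s17_pos])

lemma β₃_pos : 0 < β₃ := Real.sqrt_pos.mpr (by nlinarith [s17_pos])

lemma β_sq : β ^ 2 = (7 + Real.sqrt 17) / 2 := Real.sq_sqrt (by nlinarith [s17_pos])

lemma βm1_sq : βm1 ^ 2 = (9 + Real.sqrt 17) / 2 := Real.sq_sqrt (by nlinarith [s17_pos])

lemma β₂_sq : β₂ ^ 2 = (3 + Real.sqrt 17) / 2 := Real.sq_sqrt (by nlinarith [s17_pos])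

lemma β₃_sq : β₃ ^ 2 = (1 + Real.sqrt 17) / 2 := Real.sq_sqrt (by nlinarith [s17_pos])

/-- βm1 = β₃², since ((1+√17)/2)² = (9+√17)/2. -/
lemma key1 : βm1 = β₂ ^ 2 - 1 := by
  have h1 : βm1 ^ 2 = (β₂ ^ 2 - 1) ^ 2 := by
    rw [βm1_sq, β₂_sq]; nlinarith [s17_sq]
  have h2 : (0:ℝ) ≤ β₂ ^ 2 - 1 := by rw [β₂_sq]; nlinarith [s17_pos]
  nlinarith [βm1_pos]

/-- 2β₂β₃ = β·βm1. -/
lemma key2 : 2 * β₂ * β₃ = β * βm1 := by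
  have h1 : (2 * β₂ * β₃) ^ 2 = (β * βm1) ^ 2 := by
    have := β_sq; have := βm1_sq; have := β₂_sq; have := β₃_sq
    nlinarith [s17_sq]
  nlinarith [β_pos, βm1_pos, β₂_pos, β₃_pos, mul_pos β₂_pos β₃_pos,
    mul_pos β_pos βm1_pos]

/-- The vectors u = (β₃/(√2·β), 1/β, β₋₁/(√2·β)) and v₁ = (1/(β·β₂), −β₋₁/(2√2), β₋₁/(2·β₂²))
are orthogonal: the orthogonality, at the vertex c, of the embedding of ρ into κκ̄ with the
embedding of the identity bimodule 1 into κκ̄ for AH+1. -/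
theorem stmt_9 :
    β₃ / (Real.sqrt 2 * β ^ 2 * β₂) - βm1 / (2 * Real.sqrt 2 * β)
      + βm1 ^ 2 / (2 * Real.sqrt 2 * β * β₂ ^ 2) = 0 := by
  have hs2 : (0:ℝ) < Real.sqrt 2 := Real.sqrt_pos.mpr (by norm_num)
  have hβ := β_pos
  have hβ₂ := β₂_pos
  have h1 := key1
  have h2 := key2
  field_simp
  have hsq2 : Real.sqrt 2 ^ 2 = 2 := Real.sq_sqrt (by norm_num)
  ring_nf
  linear_combination h2 + β*βm1 * h1
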